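/- Fix an integer t ≥ 2 and δ_t ∈ (0, 1/e²). Let (H_i)_{i≥0} be a filtration on a probability space, let F be a finite index set, and for each f ∈ F and each i ∈ {1,…,t−1} let Y_{f,i} be an H_i-measurable random variable with values in [0,1]. Then with probability at least 1 − log₂(t−1)·δ_t, simultaneously for all f ∈ F: Σ_{i=1}^{t−1} E[Y_{f,i} | H_{i−1}] ≤ 68·log(|F|/δ_t) + 2·Σ_{i=1}^{t−1} Y_{f,i}. -/

import Mathlib

open MeasureTheory ProbabilityTheory Real
open scoped MeasureTheory

/-- Convexity inequality: `2^{-y} ≤ 1 - y/2` for `y ∈ [0,1]`. -/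
lemma exp_neg_log_two_mul_le {y : ℝ} (h0 : 0 ≤ y) (h1 : y ≤ 1) :
    Real.exp (-(Real.log 2 * y)) ≤ 1 - y / 2 := by
  have hconv := convexOn_exp.2 (Set.mem_univ (-Real.log 2)) (Set.mem_univ (0 : ℝ))
    h0 (by linarith : (0:ℝ) ≤ 1 - y) (by ring : y + (1 - y) = 1)
  simp only [smul_eq_mul, mul_zero, add_zero, Real.exp_zero, mul_one] at hconv
  have hexp : Real.exp (-Real.log 2) = 1 / 2 := by
    rw [Real.exp_neg, Real.exp_log (by norm_num : (0:ℝ) < 2)]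
    norm_num
  calc Real.exp (-(Real.log 2 * y)) = Real.exp (y * -Real.log 2) := by ring_nf
    _ ≤ y * Real.exp (-Real.log 2) + (1 - y) := hconv
    _ = 1 - y / 2 := by rw [hexp]; ring

/-- Key supermartingale-type estimate: the expectation of
`exp (∑ (½·E[Y i | ℋ (i-1)] − log 2 · Y i))` is at most `1`. -/
lemma key_exp_bound {Ω : Type*} {m0 : MeasurableSpace Ω} (μ : Measure Ω)
    [IsProbabilityMeasure μ] (ℋ : Filtration ℕ m0) (Y : ℕ → Ω → ℝ)
    (hYmeas : ∀ i, StronglyMeasurable[ℋ i] (Y i))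
    (hYbdd : ∀ i ω, Y i ω ∈ Set.Icc (0 : ℝ) 1) (n : ℕ) :
    Integrable (fun ω => Real.exp (∑ i ∈ Finset.Icc 1 n,
        ((1/2) * (μ[Y i | ℋ (i - 1)]) ω - Real.log 2 * Y i ω))) μ ∧
    ∫ ω, Real.exp (∑ i ∈ Finset.Icc 1 n,
        ((1/2) * (μ[Y i | ℋ (i - 1)]) ω - Real.log 2 * Y i ω)) ∂μ ≤ 1 := by
  set c : ℕ → Ω → ℝ := fun i => μ[Y i | ℋ (i - 1)] with hc_def
  have hYint : ∀ i, Integrable (Y i) μ := by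
    intro i
    refine Integrable.mono' (integrable_const (1 : ℝ))
      ((hYmeas i).mono (ℋ.le i)).aestronglyMeasurable ?_
    filter_upwards with ω
    rw [Real.norm_eq_abs, abs_le]
    exact ⟨by linarith [(hYbdd i ω).1], (hYbdd i ω).2⟩
  have hc_meas : ∀ i, StronglyMeasurable[ℋ (i - 1)] (c i) := fun i => stronglyMeasurable_condExp
  have hc01 : ∀ᵐ ω ∂μ, ∀ i, c i ω ∈ Set.Icc (0 : ℝ) 1 := by
    rw [ae_all_iff]
    intro i
    have h0 : (0 : Ω → ℝ) ≤ᵐ[μ] c i :=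
      condExp_nonneg (Filter.Eventually.of_forall fun ω => (hYbdd i ω).1)
    have h1 : c i ≤ᵐ[μ] μ[(fun _ => (1:ℝ)) | ℋ (i - 1)] :=
      condExp_mono (hYint i) (integrable_const 1)
        (Filter.Eventually.of_forall fun ω => (hYbdd i ω).2)
    have hconst : μ[(fun _ => (1:ℝ)) | ℋ (i - 1)] = fun _ => (1:ℝ) :=
      condExp_const (ℋ.le _) 1
    filter_upwards [h0, h1] with ω hω0 hω1
    exact ⟨hω0, by rw [hconst] at hω1; exact hω1⟩
  -- the partial sums
  set S : ℕ → Ω → ℝ := fun k ω =>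
    ∑ i ∈ Finset.Icc 1 k, ((1/2) * c i ω - Real.log 2 * Y i ω) with hS_def
  have hS_meas : ∀ k, StronglyMeasurable[ℋ k] (S k) := by
    intro k
    refine Finset.stronglyMeasurable_fun_sum _ fun i hi => ?_
    have hi1 : 1 ≤ i := (Finset.mem_Icc.1 hi).1
    have hik : i ≤ k := (Finset.mem_Icc.1 hi).2
    exact (((hc_meas i).mono (ℋ.mono (by omega))).const_mul _).sub
      (((hYmeas i).mono (ℋ.mono hik)).const_mul _)
  have hlog2_nonneg : (0:ℝ) ≤ Real.log 2 := Real.log_nonneg (by norm_num)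
  have hlog2_le_one : Real.log 2 ≤ 1 := by
    have := Real.log_le_sub_one_of_pos (by norm_num : (0:ℝ) < 2)
    linarith
  have hS_bdd : ∀ᵐ ω ∂μ, ∀ k, S k ω ≤ k * (1/2) := by
    filter_upwards [hc01] with ω hω k
    calc S k ω ≤ ∑ i ∈ Finset.Icc 1 k, (1/2 : ℝ) := by
          refine Finset.sum_le_sum fun i hi => ?_
          have h1 := (hω i).2
          have h2 := (hYbdd i ω).1
          nlinarith
      _ = k * (1/2) := by
          rw [Finset.sum_const, Nat.card_Icc]
          simp [nsmul_eq_mul]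
  set P : ℕ → Ω → ℝ := fun k ω => Real.exp (S k ω) with hP_def
  have hP_meas : ∀ k, StronglyMeasurable (P k) := fun k =>
    Real.continuous_exp.comp_stronglyMeasurable ((hS_meas k).mono (ℋ.le k))
  have hP_int : ∀ k, Integrable (P k) μ := by
    intro k
    refine Integrable.mono' (integrable_const (Real.exp (k * (1/2))))
      (hP_meas k).aestronglyMeasurable ?_
    filter_upwards [hS_bdd] with ω hω
    rw [Real.norm_eq_abs, abs_of_pos (Real.exp_pos _)]
    exact Real.exp_le_exp.2 (hω k)
  -- main induction
  suffices h : ∀ k, ∫ ω, P k ω ∂μ ≤ 1 from ⟨hP_int n, h n⟩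
  intro k
  induction k with
  | zero =>
    simp only [hP_def, hS_def]
    rw [show Finset.Icc 1 0 = (∅ : Finset ℕ) by rfl]
    simp
  | succ k ih =>
    have h1k : 1 ≤ k + 1 := by omega
    have hsplit : ∀ ω, S (k + 1) ω
        = S k ω + ((1/2) * c (k+1) ω - Real.log 2 * Y (k+1) ω) := by
      intro ω
      exact Finset.sum_Icc_succ_top h1k _
    set W : Ω → ℝ := fun ω => Real.exp (S k ω + (1/2) * c (k+1) ω) with hW_def
    set g : Ω → ℝ := fun ω => Real.exp (-(Real.log 2 * Y (k+1) ω)) with hg_def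
    have hWg : P (k+1) = fun ω => W ω * g ω := by
      funext ω
      rw [hW_def, hg_def]
      simp only [hP_def]
      rw [← Real.exp_add, hsplit ω]
      ring_nf
    have hck1 : StronglyMeasurable[ℋ k] (c (k+1)) := by
      have := hc_meas (k+1)
      simpa using this
    have hW_meas : StronglyMeasurable[ℋ k] W :=
      Real.continuous_exp.comp_stronglyMeasurable ((hS_meas k).add (hck1.const_mul _))
    have hW_nonneg : ∀ ω, 0 ≤ W ω := fun ω => (Real.exp_pos _).le
    have hW_bdd : ∀ᵐ ω ∂μ, W ω ≤ Real.exp (k * (1/2) + 1/2) := by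
      filter_upwards [hS_bdd, hc01] with ω hω hω'
      refine Real.exp_le_exp.2 ?_
      have := (hω' (k+1)).2
      have := hω k
      linarith
    have hg_le_one : ∀ ω, g ω ≤ 1 := by
      intro ω
      rw [hg_def]
      refine Real.exp_le_one_iff.2 ?_
      have := (hYbdd (k+1) ω).1
      nlinarith
    have hg_nonneg : ∀ ω, 0 ≤ g ω := fun ω => (Real.exp_pos _).le
    have hg_meas : StronglyMeasurable g :=
      Real.continuous_exp.comp_stronglyMeasurable
        ((((hYmeas (k+1)).mono (ℋ.le _)).const_mul _).neg)
    have hg_int : Integrable g μ := by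
      refine Integrable.mono' (integrable_const (1 : ℝ)) hg_meas.aestronglyMeasurable ?_
      filter_upwards with ω
      rw [Real.norm_eq_abs, abs_of_nonneg (hg_nonneg ω)]
      exact hg_le_one ω
    have hWg_int : Integrable (fun ω => W ω * g ω) μ := by
      rw [← hWg]; exact hP_int (k+1)
    -- conditional expectation bound for g
    have hcondg_le : μ[g | ℋ k] ≤ᵐ[μ] fun ω => Real.exp (-((1/2) * c (k+1) ω)) := by
      have hYhalf_int : Integrable (fun ω => 1 - Y (k+1) ω / 2) μ :=
        (integrable_const (1:ℝ)).sub ((hYint (k+1)).div_const 2)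
      have step1 : μ[g | ℋ k] ≤ᵐ[μ] μ[(fun ω => 1 - Y (k+1) ω / 2) | ℋ k] := by
        refine condExp_mono hg_int hYhalf_int ?_
        refine Filter.Eventually.of_forall fun ω => ?_
        exact exp_neg_log_two_mul_le (hYbdd (k+1) ω).1 (hYbdd (k+1) ω).2
      have step2 : μ[(fun ω => 1 - Y (k+1) ω / 2) | ℋ k]
          =ᵐ[μ] fun ω => 1 - c (k+1) ω / 2 := by
        have hsub := condExp_sub (m := ℋ k) (μ := μ)
          (integrable_const (1:ℝ)) ((hYint (k+1)).div_const 2)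
        have hhalf : μ[(fun ω => Y (k+1) ω / 2) | ℋ k]
            =ᵐ[μ] fun ω => c (k+1) ω / 2 := by
          have hsmul := condExp_smul (μ := μ) (m := ℋ k) ((2:ℝ)⁻¹) (Y (k+1))
          have heq : ((2:ℝ)⁻¹ • Y (k+1)) = fun ω => Y (k+1) ω / 2 := by
            funext ω; simp [div_eq_inv_mul]
          rw [heq] at hsmul
          refine hsmul.trans ?_
          have : c (k+1) = μ[Y (k+1) | ℋ k] := by simp [hc_def]
          rw [← this]
          refine Filter.EventuallyEq.of_eq ?_
          funext ω; simp [div_eq_inv_mul]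
        have hconst : μ[(fun _ : Ω => (1:ℝ)) | ℋ k] = fun _ => (1:ℝ) :=
          condExp_const (ℋ.le _) 1
        calc μ[(fun ω => 1 - Y (k+1) ω / 2) | ℋ k]
            =ᵐ[μ] μ[(fun _ : Ω => (1:ℝ)) | ℋ k] - μ[(fun ω => Y (k+1) ω / 2) | ℋ k] := hsub
          _ =ᵐ[μ] fun ω => 1 - c (k+1) ω / 2 := by
              filter_upwards [hhalf] with ω hω
              simp [hconst, Pi.sub_apply, hω]
      filter_upwards [step1, step2] with ω h1 h2
      calc (μ[g | ℋ k]) ω ≤ 1 - c (k+1) ω / 2 := h2 ▸ h1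
        _ ≤ Real.exp (-((1/2) * c (k+1) ω)) := by
            have := Real.add_one_le_exp (-((1/2) * c (k+1) ω))
            linarith
    have hcond_nonneg : (0 : Ω → ℝ) ≤ᵐ[μ] μ[g | ℋ k] :=
      condExp_nonneg (Filter.Eventually.of_forall hg_nonneg)
    -- integrability of W * condexp g
    have hWcond_int : Integrable (fun ω => W ω * (μ[g | ℋ k]) ω) μ := by
      refine Integrable.mono' (integrable_const (Real.exp (k * (1/2) + 1/2)))
        ((hW_meas.mono (ℋ.le k)).mul
          (stronglyMeasurable_condExp.mono (ℋ.le k))).aestronglyMeasurable ?_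
      have hcond_le_one : μ[g | ℋ k] ≤ᵐ[μ] fun _ => (1:ℝ) := by
        have := condExp_mono (m := ℋ k) hg_int (integrable_const (1:ℝ))
          (Filter.Eventually.of_forall hg_le_one)
        rw [condExp_const (ℋ.le k) (1:ℝ)] at this
        exact this
      filter_upwards [hW_bdd, hcond_nonneg, hcond_le_one] with ω h1 h2 h3
      rw [Real.norm_eq_abs, abs_of_nonneg (mul_nonneg (hW_nonneg ω) h2)]
      calc W ω * (μ[g | ℋ k]) ω ≤ W ω * 1 :=
            mul_le_mul_of_nonneg_left h3 (hW_nonneg ω)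
        _ ≤ Real.exp (k * (1/2) + 1/2) := by rw [mul_one]; exact h1
    -- the identity W * exp(-½c) = P k
    have hWP : (fun ω => W ω * Real.exp (-((1/2) * c (k+1) ω))) = P k := by
      funext ω
      rw [hW_def]
      simp only [hP_def]
      rw [← Real.exp_add]
      ring_nf
    calc ∫ ω, P (k+1) ω ∂μ = ∫ ω, W ω * g ω ∂μ := by rw [hWg]
      _ = ∫ ω, (μ[(fun ω => W ω * g ω) | ℋ k]) ω ∂μ := (integral_condExp (ℋ.le k)).symm
      _ = ∫ ω, W ω * (μ[g | ℋ k]) ω ∂μ := by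
          refine integral_congr_ae ?_
          have := condExp_mul_of_stronglyMeasurable_left hW_meas hWg_int hg_int
          filter_upwards [this] with ω hω
          exact hω
      _ ≤ ∫ ω, W ω * Real.exp (-((1/2) * c (k+1) ω)) ∂μ := by
          refine integral_mono_ae hWcond_int (by rw [hWP]; exact hP_int k) ?_
          filter_upwards [hcondg_le] with ω hω
          exact mul_le_mul_of_nonneg_left hω (hW_nonneg ω)
      _ = ∫ ω, P k ω ∂μ := by rw [hWP]
      _ ≤ 1 := ih

/-- Fix an integer `t ≥ 2` and `δₜ ∈ (0, 1/e²)`. Let `(H i)` be a filtration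
on a probability space, `F` a finite index set, and for each `f : F` and `i ∈ {1,…,t−1}` let
`Y f i` be an `H i`-measurable random variable with values in `[0,1]`. Then with probability at
least `1 − log₂(t−1)·δₜ`, simultaneously for all `f : F`:
`∑_{i=1}^{t−1} E[Y f i | H (i−1)] ≤ 68·log(|F|/δₜ) + 2·∑_{i=1}^{t−1} Y f i`. -/
theorem stmt0 {Ω : Type*} {m0 : MeasurableSpace Ω} (μ : Measure Ω) [IsProbabilityMeasure μ]
    (ℋ : Filtration ℕ m0) {F : Type*} [Fintype F] [Nonempty F]
    (t : ℕ) (ht : 2 ≤ t) (δt : ℝ) (hδt : δt ∈ Set.Ioo (0 : ℝ) (1 / Real.exp 2))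
    (Y : F → ℕ → Ω → ℝ)
    (hYmeas : ∀ f i, StronglyMeasurable[ℋ i] (Y f i))
    (hYbdd : ∀ f i ω, Y f i ω ∈ Set.Icc (0 : ℝ) 1) :
    ENNReal.ofReal (1 - Real.logb 2 ((t : ℝ) - 1) * δt) ≤
      μ {ω | ∀ f : F,
        ∑ i ∈ Finset.Icc 1 (t - 1), (μ[Y f i | ℋ (i - 1)]) ω ≤
          68 * Real.log ((Fintype.card F : ℝ) / δt)
            + 2 * ∑ i ∈ Finset.Icc 1 (t - 1), Y f i ω} := by
  obtain ⟨hδ0, hδ1⟩ := hδt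
  set n := t - 1 with hn_def
  have hcard1 : (1 : ℝ) ≤ (Fintype.card F : ℝ) := by
    exact_mod_cast Nat.one_le_iff_ne_zero.2 Fintype.card_ne_zero
  have hcardpos : (0 : ℝ) < (Fintype.card F : ℝ) := by linarith
  set L : ℝ := Real.log ((Fintype.card F : ℝ) / δt) with hL_def
  have hδ1' : δt * Real.exp 2 < 1 := by
    rw [div_eq_inv_mul, mul_one] at hδ1
    calc δt * Real.exp 2 < (Real.exp 2)⁻¹ * Real.exp 2 := by
          exact mul_lt_mul_of_pos_right hδ1 (Real.exp_pos 2)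
      _ = 1 := inv_mul_cancel₀ (Real.exp_pos 2).ne'
  have hδt_lt_one : δt < 1 := by nlinarith [Real.exp_pos 2, Real.add_one_le_exp (2:ℝ)]
  have hL2 : 2 ≤ L := by
    have h1 : Real.exp 2 ≤ (Fintype.card F : ℝ) / δt := by
      rw [le_div_iff₀ hδ0]
      nlinarith
    calc (2:ℝ) = Real.log (Real.exp 2) := (Real.log_exp 2).symm
      _ ≤ L := Real.log_le_log (Real.exp_pos 2) h1
  -- the bad events
  set Bad : F → Set Ω := fun f => {ω | ¬ (∑ i ∈ Finset.Icc 1 n, (μ[Y f i | ℋ (i - 1)]) ω ≤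
      68 * L + 2 * ∑ i ∈ Finset.Icc 1 n, Y f i ω)} with hBad_def
  set S : Set Ω := {ω | ∀ f : F,
      ∑ i ∈ Finset.Icc 1 n, (μ[Y f i | ℋ (i - 1)]) ω ≤
        68 * L + 2 * ∑ i ∈ Finset.Icc 1 n, Y f i ω} with hS_def
  have hScompl : Sᶜ ⊆ ⋃ f, Bad f := by
    intro ω hω
    simp only [hS_def, Set.mem_compl_iff, Set.mem_setOf_eq, not_forall] at hω
    obtain ⟨f, hf⟩ := hω
    exact Set.mem_iUnion.2 ⟨f, hf⟩
  -- per-f bound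
  have hBadBound : ∀ f, μ (Bad f) ≤ ENNReal.ofReal (δt / (Fintype.card F : ℝ)) := by
    intro f
    obtain ⟨hint, hle⟩ := key_exp_bound μ ℋ (Y f) (hYmeas f) (hYbdd f) n
    set Z : Ω → ℝ := fun ω => Real.exp (∑ i ∈ Finset.Icc 1 n,
        ((1/2) * (μ[Y f i | ℋ (i - 1)]) ω - Real.log 2 * Y f i ω)) with hZ_def
    set ε : ℝ := Real.exp (34 * L) with hε_def
    have hεpos : 0 < ε := Real.exp_pos _
    have hmarkov := mul_meas_ge_le_integral_of_nonneg
      (Filter.Eventually.of_forall fun ω => (Real.exp_pos _).le) hint ε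
    have hsub : Bad f ⊆ {ω | ε ≤ Z ω} := by
      intro ω hω
      simp only [hBad_def, Set.mem_setOf_eq, not_le] at hω
      have hYsum : 0 ≤ ∑ i ∈ Finset.Icc 1 n, Y f i ω :=
        Finset.sum_nonneg fun i _ => (hYbdd f i ω).1
      have hlog2 : Real.log 2 ≤ 1 := by
        have := Real.log_le_sub_one_of_pos (by norm_num : (0:ℝ) < 2)
        linarith
      have hexps : ∑ i ∈ Finset.Icc 1 n,
          ((1/2) * (μ[Y f i | ℋ (i - 1)]) ω - Real.log 2 * Y f i ω)
          = (1/2) * ∑ i ∈ Finset.Icc 1 n, (μ[Y f i | ℋ (i - 1)]) ω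
            - Real.log 2 * ∑ i ∈ Finset.Icc 1 n, Y f i ω := by
        rw [Finset.sum_sub_distrib, Finset.mul_sum, Finset.mul_sum]
      have hlog2nonneg : (0:ℝ) ≤ Real.log 2 := Real.log_nonneg (by norm_num)
      have : 34 * L ≤ ∑ i ∈ Finset.Icc 1 n,
          ((1/2) * (μ[Y f i | ℋ (i - 1)]) ω - Real.log 2 * Y f i ω) := by
        rw [hexps]
        nlinarith
      exact Real.exp_le_exp.2 this
    have htoReal : (μ {ω | ε ≤ Z ω}).toReal ≤ Real.exp (-(34 * L)) := by
      have hx : ε * (μ {ω | ε ≤ Z ω}).toReal ≤ 1 := hmarkov.trans hle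
      rw [Real.exp_neg]
      calc (μ {ω | ε ≤ Z ω}).toReal = ε⁻¹ * (ε * (μ {ω | ε ≤ Z ω}).toReal) := by
            field_simp
        _ ≤ ε⁻¹ * 1 := mul_le_mul_of_nonneg_left hx (inv_nonneg.2 hεpos.le)
        _ = (Real.exp (34 * L))⁻¹ := by rw [mul_one]
    have hexpL : Real.exp (-(34 * L)) ≤ δt / (Fintype.card F : ℝ) := by
      have hx : Real.exp (-L) = δt / (Fintype.card F : ℝ) := by
        rw [Real.exp_neg, hL_def, Real.exp_log (by positivity), inv_div]
      have h34 : Real.exp (-(34 * L)) = (Real.exp (-L)) ^ (34 : ℕ) := by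
        rw [← Real.exp_nat_mul]
        norm_num
      rw [h34, hx]
      have hle1 : δt / (Fintype.card F : ℝ) ≤ 1 := by
        rw [div_le_one hcardpos]; linarith
      have hge0 : 0 ≤ δt / (Fintype.card F : ℝ) := by positivity
      calc (δt / (Fintype.card F : ℝ)) ^ (34:ℕ) ≤ (δt / (Fintype.card F : ℝ)) ^ (1:ℕ) :=
            pow_le_pow_of_le_one hge0 hle1 (by norm_num)
        _ = δt / (Fintype.card F : ℝ) := pow_one _
    calc μ (Bad f) ≤ μ {ω | ε ≤ Z ω} := measure_mono hsub
      _ = ENNReal.ofReal ((μ {ω | ε ≤ Z ω}).toReal) :=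
          (ENNReal.ofReal_toReal (measure_ne_top μ _)).symm
      _ ≤ ENNReal.ofReal (δt / (Fintype.card F : ℝ)) :=
          ENNReal.ofReal_le_ofReal (htoReal.trans hexpL)
  -- union bound
  have hUnion : μ Sᶜ ≤ ENNReal.ofReal δt := by
    calc μ Sᶜ ≤ μ (⋃ f, Bad f) := measure_mono hScompl
      _ ≤ ∑' f, μ (Bad f) := measure_iUnion_le _
      _ ≤ ∑' (_ : F), ENNReal.ofReal (δt / (Fintype.card F : ℝ)) :=
          ENNReal.tsum_le_tsum hBadBound
      _ = (Fintype.card F : ENNReal) * ENNReal.ofReal (δt / (Fintype.card F : ℝ)) := by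
          rw [tsum_fintype, Finset.sum_const, nsmul_eq_mul]
          simp
      _ = ENNReal.ofReal δt := by
          rw [show ((Fintype.card F : ENNReal)) = ENNReal.ofReal ((Fintype.card F : ℝ)) by
                simp [ENNReal.ofReal_natCast],
            ← ENNReal.ofReal_mul (by positivity), mul_div_cancel₀ _ hcardpos.ne']
  have hsum1 : (1 : ENNReal) ≤ μ S + μ Sᶜ := by
    calc (1 : ENNReal) = μ Set.univ := (measure_univ).symm
      _ = μ (S ∪ Sᶜ) := by rw [Set.union_compl_self]
      _ ≤ μ S + μ Sᶜ := measure_union_le _ _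
  by_cases ht2 : t = 2
  · -- t = 2 : the event holds almost surely
    subst ht2
    have hIcc : Finset.Icc 1 n = {1} := by simp [hn_def]
    have hae : ∀ f, μ (Bad f) = 0 := by
      intro f
      have hYint : Integrable (Y f 1) μ := by
        refine Integrable.mono' (integrable_const (1 : ℝ))
          ((hYmeas f 1).mono (ℋ.le 1)).aestronglyMeasurable ?_
        filter_upwards with ω
        rw [Real.norm_eq_abs, abs_le]
        exact ⟨by linarith [(hYbdd f 1 ω).1], (hYbdd f 1 ω).2⟩
      have hc1 : (μ[Y f 1 | ℋ 0]) ≤ᵐ[μ] fun _ => (1:ℝ) := by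
        have := condExp_mono (m := ℋ 0) hYint (integrable_const (1:ℝ))
          (Filter.Eventually.of_forall fun ω => (hYbdd f 1 ω).2)
        rw [condExp_const (ℋ.le 0) (1:ℝ)] at this
        exact this
      have : ∀ᵐ ω ∂μ, ω ∉ Bad f := by
        filter_upwards [hc1] with ω hω
        simp only [hBad_def, Set.mem_setOf_eq, not_not, hIcc, Finset.sum_singleton]
        have hY0 := (hYbdd f 1 ω).1
        linarith
      simpa [ae_iff] using this
    have hcompl0 : μ Sᶜ = 0 := by
      refine le_antisymm ?_ (zero_le)
      calc μ Sᶜ ≤ μ (⋃ f, Bad f) := measure_mono hScompl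
        _ ≤ ∑' f, μ (Bad f) := measure_iUnion_le _
        _ = 0 := by simp [hae]
    have hμS : (1 : ENNReal) ≤ μ S := by rw [hcompl0, add_zero] at hsum1; exact hsum1
    refine le_trans ?_ hμS
    have hlogb0 : Real.logb 2 (((2:ℕ):ℝ) - 1) = 0 := by norm_num [Real.logb]
    rw [hlogb0]
    simp
  · -- t ≥ 3 : use 1 ≤ logb 2 (t-1)
    have ht3 : 3 ≤ t := by omega
    have hlogb1 : (1:ℝ) ≤ Real.logb 2 ((t:ℝ) - 1) := by
      have h2 : (2:ℝ) ≤ (t:ℝ) - 1 := by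
        have : (3:ℝ) ≤ (t:ℝ) := by exact_mod_cast ht3
        linarith
      calc (1:ℝ) = Real.logb 2 2 := (Real.logb_self_eq_one (by norm_num : (1:ℝ) < 2)).symm
        _ ≤ Real.logb 2 ((t:ℝ) - 1) :=
            Real.logb_le_logb_of_le (by norm_num : (1:ℝ) < 2) (by norm_num) h2
    have h1 : 1 - Real.logb 2 ((t:ℝ) - 1) * δt ≤ 1 - δt := by nlinarith
    calc ENNReal.ofReal (1 - Real.logb 2 ((t:ℝ) - 1) * δt)
        ≤ ENNReal.ofReal (1 - δt) := ENNReal.ofReal_le_ofReal h1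
      _ ≤ μ S := by
          rw [show ENNReal.ofReal (1 - δt) = ENNReal.ofReal 1 - ENNReal.ofReal δt from
            ENNReal.ofReal_sub 1 hδ0.le]
          rw [ENNReal.ofReal_one]
          exact tsub_le_iff_right.2 (hsum1.trans (add_le_add_right hUnion _))
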